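/- Let n ≥ 1 and let b_1, …, b_n be pairwise distinct elements of R. For a ∈ k, let wt_a = #{i : b_i ≡ a (mod t)} (only finitely many a ∈ k have wt_a ≠ 0). Then ν(∏_{(i,j) : i ≠ j} (b_i − b_j)) = Σ_{a ∈ k} wt_a(wt_a − 1) + Σ_{(i,j) : i ≠ j, b_i ≡ b_j (mod t)} ν((b_i − b_j)/t), where for b_i ≡ b_j (mod t) the element (b_i − b_j)/t lies in R, and both products/sums over (i,j) run over ordered pairs of distinct indices. -/

import Mathlib

open scoped Classical

section Aux
variable {R : Type*} [CommRing R] [IsDomain R]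

private lemma aux_pow_eq {t : R} (ht : Irreducible t) {m n : ℕ}
    (h : Associated (t ^ m) (t ^ n)) : m = n := by
  by_contra hne
  wlog hlt : m < n generalizing m n
  · exact this h.symm (Ne.symm hne) (by omega)
  obtain ⟨u, hu⟩ := h
  have htne : (t : R) ≠ 0 := ht.ne_zero
  have hpow : t ^ m * (u : R) = t ^ m * t ^ (n - m) := by
    rw [hu, ← pow_add]; congr 1; omega
  have heq : (u : R) = t ^ (n - m) := mul_left_cancel₀ (pow_ne_zero _ htne) hpow
  have hunit : IsUnit (t ^ (n - m)) := heq ▸ u.isUnit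
  exact ht.not_isUnit
    (isUnit_of_dvd_unit (dvd_pow_self t (by omega : n - m ≠ 0)) hunit)

variable {t : R} {ν : R → ℕ}

private lemma aux_mul (ht : Irreducible t)
    (hν : ∀ x : R, x ≠ 0 → Associated (t ^ ν x) x)
    {x y : R} (hx : x ≠ 0) (hy : y ≠ 0) : ν (x * y) = ν x + ν y := by
  apply aux_pow_eq ht
  have h2 : Associated (t ^ ν x * t ^ ν y) (x * y) := (hν x hx).mul_mul (hν y hy)
  rw [← pow_add] at h2
  exact (hν _ (mul_ne_zero hx hy)).trans h2.symm

private lemma aux_one (ht : Irreducible t)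
    (hν : ∀ x : R, x ≠ 0 → Associated (t ^ ν x) x) : ν 1 = 0 :=
  aux_pow_eq ht (by simpa using hν 1 one_ne_zero)

private lemma aux_t (ht : Irreducible t)
    (hν : ∀ x : R, x ≠ 0 → Associated (t ^ ν x) x) : ν t = 1 :=
  aux_pow_eq ht (by simpa using hν t ht.ne_zero)

private lemma aux_zero (hν : ∀ x : R, x ≠ 0 → Associated (t ^ ν x) x)
    {x : R} (hx : x ≠ 0) (h : ¬ t ∣ x) : ν x = 0 := by
  by_contra hne
  exact h ((dvd_pow_self t hne).trans (hν x hx).dvd)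

private lemma aux_prod (ht : Irreducible t)
    (hν : ∀ x : R, x ≠ 0 → Associated (t ^ ν x) x)
    {ι : Type*} (s : Finset ι) (f : ι → R) (hf : ∀ i ∈ s, f i ≠ 0) :
    ν (∏ i ∈ s, f i) = ∑ i ∈ s, ν (f i) := by
  induction s using Finset.cons_induction with
  | empty => simpa using aux_one ht hν
  | cons a s ha ih =>
    rw [Finset.prod_cons, Finset.sum_cons,
      aux_mul ht hν (hf a (Finset.mem_cons_self a s))
        (Finset.prod_ne_zero_iff.mpr fun i hi => hf i (Finset.mem_cons_of_mem hi)),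
      ih fun i hi => hf i (Finset.mem_cons_of_mem hi)]

end Aux

open scoped Classical in
/-- decomposition of the valuation of the discriminant-type product
`∏_{i ≠ j} (b i - b j)` over a discrete valuation ring. -/
theorem stmt_14
    (R : Type*) [CommRing R] [IsDomain R] [IsDiscreteValuationRing R]
    (t : R) (ht : Irreducible t)
    (ν : R → ℕ) (hν : ∀ x : R, x ≠ 0 → Associated (t ^ ν x) x)
    (n : ℕ) (hn : 1 ≤ n) (b : Fin n → R) (hb : Function.Injective b)
    (c : Fin n → Fin n → R)
    (hc : ∀ i j : Fin n,
      Ideal.Quotient.mk (Ideal.span {t}) (b i) = Ideal.Quotient.mk (Ideal.span {t}) (b j) →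
      b i - b j = t * c i j) :
    ν (∏ p ∈ Finset.univ.filter (fun p : Fin n × Fin n => p.1 ≠ p.2), (b p.1 - b p.2))
      = (∑ a ∈ Finset.univ.image (fun i : Fin n => Ideal.Quotient.mk (Ideal.span {t}) (b i)),
          (Finset.univ.filter
              (fun i : Fin n => Ideal.Quotient.mk (Ideal.span {t}) (b i) = a)).card *
          ((Finset.univ.filter
              (fun i : Fin n => Ideal.Quotient.mk (Ideal.span {t}) (b i) = a)).card - 1))
        + ∑ p ∈ Finset.univ.filter (fun p : Fin n × Fin n => p.1 ≠ p.2 ∧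
            Ideal.Quotient.mk (Ideal.span {t}) (b p.1)
              = Ideal.Quotient.mk (Ideal.span {t}) (b p.2)),
            ν (c p.1 p.2) := by
  set q : Fin n → R ⧸ Ideal.span {t} := fun i => Ideal.Quotient.mk (Ideal.span {t}) (b i)
    with hqdef
  have hbne : ∀ p : Fin n × Fin n, p.1 ≠ p.2 → b p.1 - b p.2 ≠ 0 :=
    fun p hp => sub_ne_zero.mpr fun h => hp (hb h)
  -- dvd iff congruent
  have hdvd : ∀ i j : Fin n, t ∣ (b i - b j) ↔ q i = q j := by
    intro i j
    rw [hqdef]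
    simp only [← Ideal.mem_span_singleton, ← Ideal.Quotient.eq]
  -- valuation of product is sum of valuations
  rw [aux_prod ht hν _ _ (fun p hp => hbne p (Finset.mem_filter.mp hp).2)]
  -- split the sum
  rw [← Finset.sum_filter_add_sum_filter_not
    (Finset.univ.filter fun p : Fin n × Fin n => p.1 ≠ p.2)
    (fun p : Fin n × Fin n => q p.1 = q p.2) (fun p => ν (b p.1 - b p.2))]
  -- the non-congruent part vanishes
  have hzero : ∑ p ∈ (Finset.univ.filter fun p : Fin n × Fin n => p.1 ≠ p.2).filter
      (fun p => ¬ q p.1 = q p.2), ν (b p.1 - b p.2) = 0 := by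
    apply Finset.sum_eq_zero
    intro p hp
    simp only [Finset.mem_filter] at hp
    exact aux_zero hν (hbne p hp.1.2) (fun hd => hp.2 ((hdvd p.1 p.2).mp hd))
  -- the congruent part
  have hfilter : (Finset.univ.filter fun p : Fin n × Fin n => p.1 ≠ p.2).filter
      (fun p => q p.1 = q p.2)
      = Finset.univ.filter (fun p : Fin n × Fin n => p.1 ≠ p.2 ∧ q p.1 = q p.2) := by
    rw [Finset.filter_filter]
  have hcong : ∑ p ∈ (Finset.univ.filter fun p : Fin n × Fin n => p.1 ≠ p.2).filter
      (fun p => q p.1 = q p.2), ν (b p.1 - b p.2)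
      = (Finset.univ.filter (fun p : Fin n × Fin n => p.1 ≠ p.2 ∧ q p.1 = q p.2)).card
        + ∑ p ∈ Finset.univ.filter (fun p : Fin n × Fin n => p.1 ≠ p.2 ∧ q p.1 = q p.2),
            ν (c p.1 p.2) := by
    rw [hfilter]
    rw [Finset.sum_congr rfl (g := fun p : Fin n × Fin n => 1 + ν (c p.1 p.2)) ?_]
    · rw [Finset.sum_add_distrib, Finset.sum_const, smul_eq_mul, mul_one]
    · intro p hp
      simp only [Finset.mem_filter] at hp
      have heq : b p.1 - b p.2 = t * c p.1 p.2 := hc p.1 p.2 hp.2.2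
      have hcne : c p.1 p.2 ≠ 0 := by
        intro h0
        exact hbne p hp.2.1 (by rw [heq, h0, mul_zero])
      rw [heq, aux_mul ht hν ht.ne_zero hcne, aux_t ht hν]
  -- counting: the number of congruent off-diagonal pairs
  have hcount : (Finset.univ.filter (fun p : Fin n × Fin n => p.1 ≠ p.2 ∧ q p.1 = q p.2)).card
      = ∑ a ∈ Finset.univ.image q,
          (Finset.univ.filter fun i : Fin n => q i = a).card *
            ((Finset.univ.filter fun i : Fin n => q i = a).card - 1) := by
    have hset : (Finset.univ.filter (fun p : Fin n × Fin n => p.1 ≠ p.2 ∧ q p.1 = q p.2))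
        = (Finset.univ.image q).biUnion
            (fun a => (Finset.univ.filter fun i : Fin n => q i = a).offDiag) := by
      ext p
      simp only [Finset.mem_filter, Finset.mem_biUnion, Finset.mem_image,
        Finset.mem_offDiag, Finset.mem_univ, true_and]
      constructor
      · rintro ⟨hne, hqe⟩
        exact ⟨q p.1, ⟨p.1, rfl⟩, rfl, hqe.symm, hne⟩
      · rintro ⟨a, -, h1, h2, hne⟩
        exact ⟨hne, h1.trans h2.symm⟩
    rw [hset, Finset.card_biUnion]
    · apply Finset.sum_congr rfl
      intro a _
      rw [Finset.offDiag_card]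
      rcases (Finset.univ.filter fun i : Fin n => q i = a).card with _ | m
      · simp
      · simp [Nat.succ_sub_one, Nat.succ_mul, Nat.mul_succ]
    · intro a _ b' _ hab
      apply Finset.disjoint_left.mpr
      intro p hp hp'
      simp only [Finset.mem_offDiag, Finset.mem_filter, Finset.mem_univ, true_and] at hp hp'
      exact hab (hp.1.symm.trans hp'.1)
  rw [hzero, hcong, hcount]
  ring
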